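/- Let n be a positive integer and let W be a real symmetric positive semidefinite matrix indexed by (Fin n ⊕ Fin n) × (Fin n ⊕ Fin n). For any indices i, j ∈ Fin n, writing i, j for the first-copy indices and i′, j′ for the second-copy indices, define c_ii := W(i,i) + W(i′,i′), c_jj := W(j,j) + W(j′,j′), c_ij := W(i,j) + W(i′,j′), and s_ij := W(i,j′) − W(j,i′). Then c_ij² + s_ij² ≤ c_ii·c_jj. -/

import Mathlib

open Sum

/-- The SDP constraint `W ⪰ 0` implies the rotated second-order cone constraint
`c_ij² + s_ij² ≤ c_ii·c_jj`, where `c_ij := W(i,j) + W(i',j')`,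
`s_ij := W(i,j') - W(j,i')`, `c_ii := W(i,i) + W(i',i')`. -/
theorem sdp_implies_soc (n : ℕ) (hn : 0 < n)
    (W : Matrix (Fin n ⊕ Fin n) (Fin n ⊕ Fin n) ℝ) (hW : W.PosSemidef)
    (i j : Fin n) :
    (W (inl i) (inl j) + W (inr i) (inr j)) ^ 2 +
      (W (inl i) (inr j) - W (inl j) (inr i)) ^ 2 ≤
    (W (inl i) (inl i) + W (inr i) (inr i)) *
      (W (inl j) (inl j) + W (inr j) (inr j)) := by
  have hsym : ∀ x y, W y x = W x y := by
    intro x y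
    have h := congrFun (congrFun hW.1 x) y
    simpa [Matrix.conjTranspose_apply] using h
  rw [hsym (inr i) (inl j)]
  set A11 := W (inl i) (inl i) with hA11
  set A12 := W (inl i) (inr i) with hA12
  set A13 := W (inl i) (inl j) with hA13
  set A14 := W (inl i) (inr j) with hA14
  set A22 := W (inr i) (inr i) with hA22
  set A23 := W (inr i) (inl j) with hA23
  set A24 := W (inr i) (inr j) with hA24
  set A33 := W (inl j) (inl j) with hA33
  set A34 := W (inl j) (inr j) with hA34
  set A44 := W (inr j) (inr j) with hA44
  -- the quadratic form on the 4-dimensional subspace spanned by the relevant coordinates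
  have hQ : ∀ p q r t : ℝ,
      0 ≤ p^2*A11 + q^2*A22 + r^2*A33 + t^2*A44 + 2*p*q*A12 + 2*p*r*A13
          + 2*p*t*A14 + 2*q*r*A23 + 2*q*t*A24 + 2*r*t*A34 := by
    intro p q r t
    have hM := (hW.submatrix ![inl i, inr i, inl j, inr j]).dotProduct_mulVec_nonneg ![p, q, r, t]
    simp only [dotProduct, Matrix.mulVec, Matrix.submatrix_apply,
      Fin.sum_univ_four, Matrix.cons_val_zero, Matrix.cons_val_one, Matrix.head_cons,
      Matrix.cons_val_two, Matrix.tail_cons, Matrix.cons_val_three, Matrix.head_fin_const,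
      star_trivial, Pi.star_apply] at hM
    have e1 : W (inr i) (inl i) = A12 := hsym _ _
    have e2 : W (inl j) (inl i) = A13 := hsym _ _
    have e3 : W (inr j) (inl i) = A14 := hsym _ _
    have e4 : W (inl j) (inr i) = A23 := hsym _ _
    have e5 : W (inr j) (inr i) = A24 := hsym _ _
    have e6 : W (inr j) (inl j) = A34 := hsym _ _
    rw [e1, e2, e3, e4, e5, e6, ← hA11, ← hA12, ← hA13, ← hA14, ← hA22, ← hA23, ← hA24,
      ← hA33, ← hA34, ← hA44] at hM
    nlinarith [hM]
  set c : ℝ := A13 + A24 with hc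
  set s : ℝ := A14 - A23 with hs
  set L : ℝ := c^2 + s^2 with hL
  -- Cauchy–Schwarz style quadratic in one variable
  have h1 : ∀ u : ℝ, 0 ≤ (L * (A33 + A44)) * (u * u) + (2 * L) * u + (A11 + A22) := by
    intro u
    have h := add_nonneg (hQ 1 0 (u*c) (u*s)) (hQ 0 1 (-(u*s)) (u*c))
    refine h.trans_eq ?_
    simp only [hL, hc, hs]
    ring
  have h2 := discrim_le_zero h1
  rw [discrim] at h2
  have hLpos : 0 ≤ L := by positivity
  have hcii : 0 ≤ A11 + A22 := by nlinarith [hQ 1 0 0 0, hQ 0 1 0 0]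
  have hcjj : 0 ≤ A33 + A44 := by nlinarith [hQ 0 0 1 0, hQ 0 0 0 1]
  have goal' : L ≤ (A11 + A22) * (A33 + A44) := by
    rcases hLpos.eq_or_lt with h0 | h0
    · rw [← h0]; exact mul_nonneg hcii hcjj
    · nlinarith [h2, h0]
  calc c ^ 2 + s ^ 2 = L := hL.symm
    _ ≤ _ := goal'
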